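/- Let n be a positive integer and let π ∈ NC(n). The total number of partitions ρ ∈ NC(n) such that ρ ≫ π equals 2^{|π| − |π|_out}. -/

import Mathlib

open Finset

attribute [local instance] Classical.propDecidable

open scoped ComplexOrder

namespace BBP

/-- Partitions of `{1,…,m}` modeled as `Finpartition`s of `univ : Finset (Fin m)`. -/
abbrev FP (m : ℕ) := Finpartition (Finset.univ : Finset (Fin m))

noncomputable instance (m : ℕ) : Fintype (FP m) :=
  Fintype.ofInjective (fun π : FP m => π.parts) fun a b h => by
    cases a; cases b; simpa using h

/-- `x` is the minimum of the set `C`. -/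
def IsMinOf {m : ℕ} (x : Fin m) (C : Finset (Fin m)) : Prop :=
  x ∈ C ∧ ∀ y ∈ C, x ≤ y

/-- `x` is the maximum of the set `C`. -/
def IsMaxOf {m : ℕ} (x : Fin m) (C : Finset (Fin m)) : Prop :=
  x ∈ C ∧ ∀ y ∈ C, y ≤ x

/-- `a` and `b` lie in one block of `π`. -/
def SameBlock {m : ℕ} (π : FP m) (a b : Fin m) : Prop :=
  ∃ B ∈ π.parts, a ∈ B ∧ b ∈ B

/-- `π` is non-crossing: if `i<j<k<l`, `i,k` in one block and `j,l` in one block,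
then all of them are in one block. -/
def IsNC {m : ℕ} (π : FP m) : Prop :=
  ∀ i j k l : Fin m, i < j → j < k → k < l →
    SameBlock π i k → SameBlock π j l → SameBlock π i j

/-- `A` embraces `B` : `min A ≤ min B` and `max B ≤ max A`. -/
def Embraces {m : ℕ} (A B : Finset (Fin m)) : Prop :=
  ∃ a₁ a₂ b₁ b₂ : Fin m, IsMinOf a₁ A ∧ IsMaxOf a₂ A ∧ IsMinOf b₁ B ∧ IsMaxOf b₂ B ∧
    a₁ ≤ b₁ ∧ b₂ ≤ a₂

/-- `B` strictly embraces `A` : `min B < min A` and `max A < max B`. -/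
def StrictlyEmbraces {m : ℕ} (B A : Finset (Fin m)) : Prop :=
  ∃ b₁ b₂ a₁ a₂ : Fin m, IsMinOf b₁ B ∧ IsMaxOf b₂ B ∧ IsMinOf a₁ A ∧ IsMaxOf a₂ A ∧
    b₁ < a₁ ∧ a₂ < b₂

/-- `A` is an outer block of `π`. -/
def IsOuter {m : ℕ} (π : FP m) (A : Finset (Fin m)) : Prop :=
  A ∈ π.parts ∧ ¬ ∃ B ∈ π.parts, StrictlyEmbraces B A

/-- The number `|π|_out` of outer blocks of `π`. -/
noncomputable def numOuter {m : ℕ} (π : FP m) : ℕ :=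
  (π.parts.filter fun A => IsOuter π A).card

/-- Reversed refinement order: every block of `ρ` is a union of blocks of `π`. -/
def Refines {m : ℕ} (π ρ : FP m) : Prop :=
  ∀ B ∈ π.parts, ∃ C ∈ ρ.parts, B ⊆ C

/-- The partial order `π ≪ ρ`. -/
def Ll {m : ℕ} (π ρ : FP m) : Prop :=
  Refines π ρ ∧
    ∀ C ∈ ρ.parts, ∃ B ∈ π.parts, ∃ x y : Fin m,
      IsMinOf x C ∧ IsMaxOf y C ∧ x ∈ B ∧ y ∈ B

/-- The partition `1ₙ` of `{1,…,n+1}` with a single block. -/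
noncomputable def fullPart (n : ℕ) : FP (n+1) :=
  Finpartition.indiscrete (by simpa using (Finset.univ_nonempty (α := Fin (n+1))).ne_empty)

/-- `π` is an interval partition. -/
def IsIntervalPartition {m : ℕ} (π : FP m) : Prop :=
  ∀ B ∈ π.parts, ∀ x ∈ B, ∀ z ∈ B, ∀ y : Fin m, x ≤ y → y ≤ z → y ∈ B

/-- `σ` is the permutation associated to `π` : on each block `{b₁ < ⋯ < b_q}` it is the
cycle `b₁ ↦ b₂ ↦ ⋯ ↦ b_q ↦ b₁`. -/
def IsAssocPerm {m : ℕ} (π : FP m) (σ : Equiv.Perm (Fin m)) : Prop :=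
  ∀ B ∈ π.parts, ∀ b ∈ B, σ b ∈ B ∧
    ((b < σ b ∧ ∀ x ∈ B, b < x → σ b ≤ x) ∨ (IsMaxOf b B ∧ IsMinOf (σ b) B))

/-- `κ` is the Kreweras complement of `π`, characterized by `P_κ = P_π⁻¹ ∘ P_{1ₙ}`,
where `P_{1ₙ}` is the cycle `1 ↦ 2 ↦ ⋯ ↦ n ↦ 1` (i.e. `finRotate`). -/
def IsKrewerasPair {m : ℕ} (π κ : FP m) : Prop :=
  ∃ σπ σκ : Equiv.Perm (Fin m), IsAssocPerm π σπ ∧ IsAssocPerm κ σκ ∧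
    σκ = σπ⁻¹ * finRotate m

/-- the element `2a-1` of `{1,…,2n}`, in `Fin (2n)` (0-indexed). -/
def oddEmb {n : ℕ} (a : Fin n) : Fin (2*n) := ⟨2*a.val, by have := a.isLt; omega⟩

/-- the element `2a` of `{1,…,2n}`, in `Fin (2n)` (0-indexed). -/
def evenEmb {n : ℕ} (a : Fin n) : Fin (2*n) := ⟨2*a.val + 1, by have := a.isLt; omega⟩

/-- `θ = π^(odd) ∪ ρ^(even)` : the blocks of `θ` are the sets `{2a-1 : a ∈ A}` for `A`
a block of `π` and the sets `{2b : b ∈ B}` for `B` a block of `ρ`. -/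
def IsOddEvenJoin {n : ℕ} (π ρ : FP n) (θ : FP (2*n)) : Prop :=
  θ.parts = π.parts.image (fun B => B.image oddEmb) ∪
    ρ.parts.image (fun B => B.image evenEmb)

/-- a block consisting of odd elements of `{1,…,2n}` (even 0-indexed values). -/
def OddBlock {m : ℕ} (B : Finset (Fin m)) : Prop := ∀ x ∈ B, x.val % 2 = 0

/-- a block consisting of even elements of `{1,…,2n}` (odd 0-indexed values). -/
def EvenBlock {m : ℕ} (B : Finset (Fin m)) : Prop := ∀ x ∈ B, x.val % 2 = 1

/-- every block of `θ` is contained in the odds or in the evens. -/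
def ParityPreserving {m : ℕ} (θ : FP m) : Prop :=
  ∀ B ∈ θ.parts, OddBlock B ∨ EvenBlock B

def OppositeParity {m : ℕ} (A B : Finset (Fin m)) : Prop :=
  (OddBlock A ∧ EvenBlock B) ∨ (EvenBlock A ∧ OddBlock B)

def SameParity {m : ℕ} (A B : Finset (Fin m)) : Prop :=
  (OddBlock A ∧ OddBlock B) ∨ (EvenBlock A ∧ EvenBlock B)

/-- `P = Parent_θ(A)` : the unique block `P ≠ A` of `θ` embracing `A` such that every
block `A' ≠ A` of `θ` embracing `A` also embraces `P`. -/
def IsParent {m : ℕ} (θ : FP m) (A P : Finset (Fin m)) : Prop :=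
  P ∈ θ.parts ∧ P ≠ A ∧ Embraces P A ∧
    ∀ A' ∈ θ.parts, A' ≠ A → Embraces A' A → Embraces A' P

/-- `θ` has exactly two outer blocks. -/
def ExactlyTwoOuterBlocks {m : ℕ} (θ : FP m) : Prop :=
  ∃ M ∈ θ.parts, ∃ N ∈ θ.parts, M ≠ N ∧ IsOuter θ M ∧ IsOuter θ N ∧
    ∀ A ∈ θ.parts, IsOuter θ A → A = M ∨ A = N

/-- A series in `ℂ₀⟨⟨z₁,…,z_k⟩⟩`, given by its family of coefficients: `f n w` is the
coefficient of `z_{w 0} z_{w 1} ⋯ z_{w n}` (a word of length `n+1 ≥ 1`). -/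
abbrev NCSeries (k : ℕ) := (n : ℕ) → (Fin (n+1) → Fin k) → ℂ

/-- The coefficient `Cf_{w|B}(f)` of the restriction of the word `w` to the set `B`,
listing the elements of `B` in increasing order.  (Equals `1` for `B = ∅`.) -/
noncomputable def partCoeff {k m : ℕ} (f : NCSeries k) (w : Fin (m+1) → Fin k)
    (B : Finset (Fin (m+1))) : ℂ :=
  if h : B.Nonempty then
    f (B.card - 1) (fun j =>
      w ((B.orderIsoOfFin (Nat.succ_pred_eq_of_pos (Finset.card_pos.mpr h)).symm j).1))
  else 1

/-- The generalized coefficient `Cf_{w;π}(f) = ∏_{B block of π} Cf_{w|B}(f)`. -/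
noncomputable def genCoeff {k m : ℕ} (f : NCSeries k) (w : Fin (m+1) → Fin k)
    (π : FP (m+1)) : ℂ :=
  ∏ B ∈ π.parts, partCoeff f w B

/-- Linear functionals on `ℂ⟨X₁,…,X_k⟩`. -/
abbrev Dist (k : ℕ) := FreeAlgebra ℂ (Fin k) →ₗ[ℂ] ℂ

/-- `μ ∈ D_alg(k)` : `μ` is normalized by `μ(1) = 1`. -/
def IsDalg {k : ℕ} (μ : Dist k) : Prop := μ 1 = 1

/-- The moment series `M_μ`, with `(momentSeries μ) n w = μ (X_{w 0} ⋯ X_{w n})`. -/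
noncomputable def momentSeries {k : ℕ} (μ : Dist k) : NCSeries k :=
  fun _ w => μ ((List.ofFn fun j => FreeAlgebra.ι ℂ (w j)).prod)

/-- `f = R_μ` : the moments of `μ` are obtained from `f` by summation over all
non-crossing partitions. -/
def IsRTransform {k : ℕ} (μ : Dist k) (f : NCSeries k) : Prop :=
  ∀ (n : ℕ) (w : Fin (n+1) → Fin k),
    momentSeries μ n w = ∑ π : FP (n+1), if IsNC π then genCoeff f w π else 0

/-- `g = η_μ` : the moments of `μ` are obtained from `g` by summation over all
interval partitions. -/
def IsEtaSeries {k : ℕ} (μ : Dist k) (g : NCSeries k) : Prop :=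
  ∀ (n : ℕ) (w : Fin (n+1) → Fin k),
    momentSeries μ n w = ∑ π : FP (n+1), if IsIntervalPartition π then genCoeff g w π else 0

/-- `μ ∈ D_c(k)` : `μ` is the joint distribution of a `k`-tuple of selfadjoint elements
with respect to a state on a unital C*-algebra. -/
def IsDc {k : ℕ} (μ : Dist k) : Prop :=
  IsDalg μ ∧
  ∃ (A : Type) (_ : NormedRing A) (_ : StarRing A) (_ : CStarRing A)
    (_ : NormedAlgebra ℂ A) (_ : StarModule ℂ A) (_ : CompleteSpace A)
    (φ : A →ₗ[ℂ] ℂ) (x : Fin k → A),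
      φ 1 = 1 ∧ (∀ a : A, 0 ≤ φ (star a * a)) ∧ (∀ i, IsSelfAdjoint (x i)) ∧
      ∀ (n : ℕ) (w : Fin (n+1) → Fin k),
        momentSeries μ n w = φ ((List.ofFn fun j => x (w j)).prod)

/-- convergence in moments. -/
def ConvInMoments {k : ℕ} (μseq : ℕ → Dist k) (μ : Dist k) : Prop :=
  ∀ P : FreeAlgebra ℂ (Fin k),
    Filter.Tendsto (fun N => μseq N P) Filter.atTop (nhds (μ P))

/-- coefficientwise convergence of series. -/
def ConvCoeffwise {k : ℕ} (fseq : ℕ → NCSeries k) (f : NCSeries k) : Prop :=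
  ∀ (n : ℕ) (w : Fin (n+1) → Fin k),
    Filter.Tendsto (fun N => fseq N n w) Filter.atTop (nhds (f n w))

/-- `ν` is the `p`-fold free additive convolution `μ ⊞ ⋯ ⊞ μ`, i.e. `R_ν = p · R_μ`. -/
def IsNFoldFree {k : ℕ} (p : ℕ) (μ ν : Dist k) : Prop :=
  ∃ f : NCSeries k, IsRTransform μ f ∧ IsRTransform ν (fun n w => (p : ℂ) * f n w)

/-- `ν` is the `p`-fold Boolean convolution `μ ⊎ ⋯ ⊎ μ`, i.e. `η_ν = p · η_μ`. -/
def IsNFoldBool {k : ℕ} (p : ℕ) (μ ν : Dist k) : Prop :=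
  ∃ g : NCSeries k, IsEtaSeries μ g ∧ IsEtaSeries ν (fun n w => (p : ℂ) * g n w)

/-- `ν = 𝔹(μ)` : the Boolean Bercovici–Pata bijection, `R_{𝔹(μ)} = η_μ`. -/
def IsBP {k : ℕ} (μ ν : Dist k) : Prop :=
  ∃ f : NCSeries k, IsEtaSeries μ f ∧ IsRTransform ν f

/-- `μ ∈ D_c(k)` is infinitely divisible with respect to `⊞`. -/
def IsInfDiv {k : ℕ} (μ : Dist k) : Prop :=
  IsDc μ ∧ ∀ N : ℕ, 0 < N → ∃ ν : Dist k, IsDc ν ∧ IsNFoldFree N ν μ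

/-- `g = Reta(f)`, i.e. there is `μ ∈ D_alg(k)` with `f = R_μ` and `g = η_μ`. -/
def RetaRel {k : ℕ} (f g : NCSeries k) : Prop :=
  ∃ μ : Dist k, IsDalg μ ∧ IsRTransform μ f ∧ IsEtaSeries μ g


section Statement2Proof

variable {m : ℕ}

lemma isMinOf_min' {B : Finset (Fin m)} (hB : B.Nonempty) : IsMinOf (B.min' hB) B :=
  ⟨B.min'_mem hB, fun y hy => B.min'_le y hy⟩

lemma isMaxOf_max' {B : Finset (Fin m)} (hB : B.Nonempty) : IsMaxOf (B.max' hB) B :=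
  ⟨B.max'_mem hB, fun y hy => B.le_max' y hy⟩

lemma IsMinOf.eq_min' {x : Fin m} {B : Finset (Fin m)} (h : IsMinOf x B) (hB : B.Nonempty) :
    x = B.min' hB :=
  le_antisymm (h.2 _ (B.min'_mem hB)) (B.min'_le x h.1)

lemma IsMaxOf.eq_max' {x : Fin m} {B : Finset (Fin m)} (h : IsMaxOf x B) (hB : B.Nonempty) :
    x = B.max' hB :=
  le_antisymm (B.le_max' x h.1) (h.2 _ (B.max'_mem hB))

lemma strictlyEmbraces_iff {B A : Finset (Fin m)} (hB : B.Nonempty) (hA : A.Nonempty) :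
    StrictlyEmbraces B A ↔ B.min' hB < A.min' hA ∧ A.max' hA < B.max' hB := by
  constructor
  · rintro ⟨b₁, b₂, a₁, a₂, h1, h2, h3, h4, h5, h6⟩
    rw [h1.eq_min' hB, h3.eq_min' hA] at h5
    rw [h2.eq_max' hB, h4.eq_max' hA] at h6
    exact ⟨h5, h6⟩
  · rintro ⟨h1, h2⟩
    exact ⟨_, _, _, _, isMinOf_min' hB, isMaxOf_max' hB, isMinOf_min' hA, isMaxOf_max' hA, h1, h2⟩

lemma min'_eq_min' {s t : Finset (Fin m)} (h : s = t) (hs : s.Nonempty) (ht : t.Nonempty) :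
    s.min' hs = t.min' ht := by subst h; rfl

lemma max'_eq_max' {s t : Finset (Fin m)} (h : s = t) (hs : s.Nonempty) (ht : t.Nonempty) :
    s.max' hs = t.max' ht := by subst h; rfl

/-- The set of blocks of `π` strictly embracing `A`. -/
noncomputable def Emb (π : FP m) (A : Finset (Fin m)) : Finset (Finset (Fin m)) :=
  π.parts.filter fun B => StrictlyEmbraces B A

lemma mem_Emb {π : FP m} {A B : Finset (Fin m)} :
    B ∈ Emb π A ↔ B ∈ π.parts ∧ StrictlyEmbraces B A := Finset.mem_filter

lemma interior_lem {π : FP m} (hπ : IsNC π) {B T : Finset (Fin m)}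
    (hB : B ∈ π.parts) (hT : T ∈ π.parts) (hne : B ≠ T) {k : Fin m} (hk : k ∈ B)
    (hTne : T.Nonempty)
    (h1 : T.min' hTne < k) (h2 : k < T.max' hTne) :
    T.min' hTne < B.min' (π.nonempty_of_mem_parts hB) ∧
      B.max' (π.nonempty_of_mem_parts hB) < T.max' hTne := by
  have hBne := π.nonempty_of_mem_parts hB
  constructor
  · rcases lt_trichotomy (T.min' hTne) (B.min' hBne) with h | h | h
    · exact h
    · exact absurd (π.eq_of_mem_parts hB hT (h.symm ▸ B.min'_mem hBne) (T.min'_mem hTne)) hne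
    · have hsb1 : SameBlock π (B.min' hBne) k := ⟨B, hB, B.min'_mem hBne, hk⟩
      have hsb2 : SameBlock π (T.min' hTne) (T.max' hTne) :=
        ⟨T, hT, T.min'_mem hTne, T.max'_mem hTne⟩
      obtain ⟨D, hD, hd1, hd2⟩ := hπ _ _ _ _ h h1 h2 hsb1 hsb2
      have hDB : D = B := π.eq_of_mem_parts hD hB hd1 (B.min'_mem hBne)
      exact absurd (π.eq_of_mem_parts hB hT (hDB ▸ hd2) (T.min'_mem hTne)) hne
  · rcases lt_trichotomy (B.max' hBne) (T.max' hTne) with h | h | h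
    · exact h
    · exact absurd (π.eq_of_mem_parts hB hT (h ▸ B.max'_mem hBne) (T.max'_mem hTne)) hne
    · have hsb1 : SameBlock π (T.min' hTne) (T.max' hTne) :=
        ⟨T, hT, T.min'_mem hTne, T.max'_mem hTne⟩
      have hsb2 : SameBlock π k (B.max' hBne) := ⟨B, hB, hk, B.max'_mem hBne⟩
      obtain ⟨D, hD, hd1, hd2⟩ := hπ _ _ _ _ h1 h2 h hsb1 hsb2
      have hDT : D = T := π.eq_of_mem_parts hD hT hd1 (T.min'_mem hTne)
      exact absurd (π.eq_of_mem_parts hB hT hk (hDT ▸ hd2)) hne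

lemma emb_nested {π : FP m} (hπ : IsNC π) {A B B' : Finset (Fin m)} (hAne : A.Nonempty)
    (hB : B ∈ π.parts) (hB' : B' ∈ π.parts)
    (hsB : StrictlyEmbraces B A) (hsB' : StrictlyEmbraces B' A)
    (hlt : B.min' (π.nonempty_of_mem_parts hB) < B'.min' (π.nonempty_of_mem_parts hB')) :
    B'.max' (π.nonempty_of_mem_parts hB') < B.max' (π.nonempty_of_mem_parts hB) := by
  have hBne := π.nonempty_of_mem_parts hB
  have hB'ne := π.nonempty_of_mem_parts hB'
  rw [strictlyEmbraces_iff hBne hAne] at hsB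
  rw [strictlyEmbraces_iff hB'ne hAne] at hsB'
  have hne : B' ≠ B := by rintro rfl; exact lt_irrefl _ hlt
  have h2 : B'.min' hB'ne < B.max' hBne :=
    lt_trans hsB'.1 (lt_of_le_of_lt (A.min'_le _ (A.max'_mem hAne)) hsB.2)
  exact (interior_lem hπ hB' hB hne (B'.min'_mem hB'ne) hBne hlt h2).2

/-- The parent of a block: the strict embracer with largest minimum. -/
noncomputable def par (π : FP m) (A : Finset (Fin m)) : Finset (Fin m) :=
  if h : (Emb π A).Nonempty then
    ((Emb π A).exists_max_image (fun B => B.min) h).choose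
  else A

lemma par_spec {π : FP m} {A : Finset (Fin m)} (h : (Emb π A).Nonempty) :
    par π A ∈ Emb π A ∧ ∀ Q ∈ Emb π A, Q.min ≤ (par π A).min := by
  unfold par
  rw [dif_pos h]
  exact ((Emb π A).exists_max_image (fun B => B.min) h).choose_spec

lemma par_mem {π : FP m} {A : Finset (Fin m)} (h : (Emb π A).Nonempty) : par π A ∈ π.parts :=
  (mem_Emb.1 (par_spec h).1).1

lemma par_strict {π : FP m} {A : Finset (Fin m)} (hAne : A.Nonempty) (h : (Emb π A).Nonempty) :
    (par π A).min' (π.nonempty_of_mem_parts (par_mem h)) < A.min' hAne ∧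
      A.max' hAne < (par π A).max' (π.nonempty_of_mem_parts (par_mem h)) :=
  (strictlyEmbraces_iff (π.nonempty_of_mem_parts (par_mem h)) hAne).1 (mem_Emb.1 (par_spec h).1).2

lemma par_span {π : FP m} (hπ : IsNC π) {A : Finset (Fin m)} (hAne : A.Nonempty)
    (h : (Emb π A).Nonempty) {Q : Finset (Fin m)} (hQ : Q ∈ Emb π A) :
    Q.min' (π.nonempty_of_mem_parts (mem_Emb.1 hQ).1) ≤
        (par π A).min' (π.nonempty_of_mem_parts (par_mem h)) ∧
      (par π A).max' (π.nonempty_of_mem_parts (par_mem h)) ≤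
        Q.max' (π.nonempty_of_mem_parts (mem_Emb.1 hQ).1) := by
  have hQne := π.nonempty_of_mem_parts (mem_Emb.1 hQ).1
  have hPne := π.nonempty_of_mem_parts (par_mem h)
  have hkey := (par_spec h).2 Q hQ
  rw [← Finset.coe_min' hQne, ← Finset.coe_min' hPne] at hkey
  have hmin : Q.min' hQne ≤ (par π A).min' hPne := by exact_mod_cast hkey
  refine ⟨hmin, ?_⟩
  rcases eq_or_lt_of_le hmin with heq | hlt
  · have hQP : Q = par π A :=
      π.eq_of_mem_parts (mem_Emb.1 hQ).1 (par_mem h) (heq ▸ Q.min'_mem hQne)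
        ((par π A).min'_mem hPne)
    exact le_of_eq (max'_eq_max' hQP.symm hPne hQne)
  · exact le_of_lt (emb_nested hπ hAne (mem_Emb.1 hQ).1 (par_mem h) (mem_Emb.1 hQ).2
      (mem_Emb.1 (par_spec h).1).2 hlt)

/-- The nesting depth of a block. -/
noncomputable def dep (π : FP m) (A : Finset (Fin m)) : ℕ := (Emb π A).card

lemma dep_par_lt {π : FP m} {A : Finset (Fin m)} (hAne : A.Nonempty)
    (h : (Emb π A).Nonempty) : dep π (par π A) < dep π A := by
  have hPne := π.nonempty_of_mem_parts (par_mem h)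
  have hstrict := par_strict hAne h
  have hsub : Emb π (par π A) ⊆ (Emb π A).erase (par π A) := by
    intro Q hQ
    have hQmem := (mem_Emb.1 hQ).1
    have hQne := π.nonempty_of_mem_parts hQmem
    have hQs := (strictlyEmbraces_iff hQne hPne).1 (mem_Emb.1 hQ).2
    refine Finset.mem_erase.2 ⟨?_, mem_Emb.2 ⟨hQmem, (strictlyEmbraces_iff hQne hAne).2
      ⟨lt_trans hQs.1 hstrict.1, lt_trans hstrict.2 hQs.2⟩⟩⟩
    rintro rfl
    exact lt_irrefl _ hQs.1
  exact lt_of_le_of_lt (Finset.card_le_card hsub) (Finset.card_erase_lt_of_mem (par_spec h).1)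

lemma dep_lt {π : FP m} {A : Finset (Fin m)} (hA : A ∈ π.parts) : dep π A < m := by
  have hAne := π.nonempty_of_mem_parts hA
  have hsub : Emb π A ⊆ π.parts.erase A := by
    intro Q hQ
    refine Finset.mem_erase.2 ⟨?_, (mem_Emb.1 hQ).1⟩
    rintro rfl
    exact lt_irrefl _ ((strictlyEmbraces_iff (π.nonempty_of_mem_parts (mem_Emb.1 hQ).1) hAne).1
      (mem_Emb.1 hQ).2).1
  calc dep π A ≤ (π.parts.erase A).card := Finset.card_le_card hsub
    _ < π.parts.card := Finset.card_erase_lt_of_mem hA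
    _ ≤ (Finset.univ : Finset (Fin m)).card := π.card_parts_le_card
    _ = m := by simp

/-- The inner (non-outer) blocks of `π`. -/
noncomputable def Inn (π : FP m) : Finset (Finset (Fin m)) :=
  π.parts.filter fun A => (Emb π A).Nonempty

/-- One merging step: replace a block in `S` by its parent. -/
noncomputable def stp (π : FP m) (S : Finset (Finset (Fin m))) (B : Finset (Fin m)) :
    Finset (Fin m) := if B ∈ S then par π B else B

/-- The top of the merging chain starting at `B`. -/
noncomputable def tp (π : FP m) (S : Finset (Finset (Fin m))) (B : Finset (Fin m)) :
    Finset (Fin m) := (stp π S)^[m] B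

lemma stp_mem {π : FP m} {S : Finset (Finset (Fin m))} (hS : S ⊆ Inn π)
    {B : Finset (Fin m)} (hB : B ∈ π.parts) : stp π S B ∈ π.parts := by
  unfold stp
  by_cases h : B ∈ S
  · rw [if_pos h]; exact par_mem (Finset.mem_filter.1 (hS h)).2
  · rw [if_neg h]; exact hB

lemma iter_mem {π : FP m} {S : Finset (Finset (Fin m))} (hS : S ⊆ Inn π)
    {B : Finset (Fin m)} (hB : B ∈ π.parts) : ∀ k, (stp π S)^[k] B ∈ π.parts := by
  intro k
  induction k with
  | zero => exact hB
  | succ k ih => rw [Function.iterate_succ_apply']; exact stp_mem hS ih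

lemma tp_mem {π : FP m} {S : Finset (Finset (Fin m))} (hS : S ⊆ Inn π)
    {B : Finset (Fin m)} (hB : B ∈ π.parts) : tp π S B ∈ π.parts :=
  iter_mem hS hB m

lemma stp_span {π : FP m} {S : Finset (Finset (Fin m))} (hS : S ⊆ Inn π)
    {B : Finset (Fin m)} (hB : B ∈ π.parts) :
    (stp π S B).min' (π.nonempty_of_mem_parts (stp_mem hS hB)) ≤
        B.min' (π.nonempty_of_mem_parts hB) ∧
      B.max' (π.nonempty_of_mem_parts hB) ≤
        (stp π S B).max' (π.nonempty_of_mem_parts (stp_mem hS hB)) := by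
  by_cases h : B ∈ S
  · have hE := (Finset.mem_filter.1 (hS h)).2
    have hstrict := par_strict (π.nonempty_of_mem_parts hB) hE
    have hEq : stp π S B = par π B := if_pos h
    constructor
    · rw [min'_eq_min' hEq (π.nonempty_of_mem_parts (stp_mem hS hB))
        (π.nonempty_of_mem_parts (par_mem hE))]
      exact le_of_lt hstrict.1
    · rw [max'_eq_max' hEq (π.nonempty_of_mem_parts (stp_mem hS hB))
        (π.nonempty_of_mem_parts (par_mem hE))]
      exact le_of_lt hstrict.2
  · have hEq : stp π S B = B := if_neg h
    constructor
    · rw [min'_eq_min' hEq (π.nonempty_of_mem_parts (stp_mem hS hB))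
        (π.nonempty_of_mem_parts hB)]
    · rw [max'_eq_max' hEq (π.nonempty_of_mem_parts (stp_mem hS hB))
        (π.nonempty_of_mem_parts hB)]

lemma iter_span {π : FP m} {S : Finset (Finset (Fin m))} (hS : S ⊆ Inn π)
    {B : Finset (Fin m)} (hB : B ∈ π.parts) :
    ∀ k, ((stp π S)^[k] B).min' (π.nonempty_of_mem_parts (iter_mem hS hB k)) ≤
        B.min' (π.nonempty_of_mem_parts hB) ∧
      B.max' (π.nonempty_of_mem_parts hB) ≤
        ((stp π S)^[k] B).max' (π.nonempty_of_mem_parts (iter_mem hS hB k)) := by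
  intro k
  induction k with
  | zero => exact ⟨le_rfl, le_rfl⟩
  | succ k ih =>
    have h2 := stp_span hS (iter_mem hS hB k)
    have hEq : (stp π S)^[k+1] B = stp π S ((stp π S)^[k] B) :=
      Function.iterate_succ_apply' _ _ _
    constructor
    · rw [min'_eq_min' hEq (π.nonempty_of_mem_parts (iter_mem hS hB (k+1)))
        (π.nonempty_of_mem_parts (stp_mem hS (iter_mem hS hB k)))]
      exact le_trans h2.1 ih.1
    · rw [max'_eq_max' hEq (π.nonempty_of_mem_parts (iter_mem hS hB (k+1)))
        (π.nonempty_of_mem_parts (stp_mem hS (iter_mem hS hB k)))]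
      exact le_trans ih.2 h2.2

lemma tp_span {π : FP m} {S : Finset (Finset (Fin m))} (hS : S ⊆ Inn π)
    {B : Finset (Fin m)} (hB : B ∈ π.parts) :
    (tp π S B).min' (π.nonempty_of_mem_parts (tp_mem hS hB)) ≤
        B.min' (π.nonempty_of_mem_parts hB) ∧
      B.max' (π.nonempty_of_mem_parts hB) ≤
        (tp π S B).max' (π.nonempty_of_mem_parts (tp_mem hS hB)) :=
  iter_span hS hB m

lemma stp_fix_of_dep {π : FP m} {S : Finset (Finset (Fin m))} (hS : S ⊆ Inn π) :
    ∀ k, ∀ B, B ∈ π.parts → dep π B < k →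
      stp π S ((stp π S)^[k] B) = (stp π S)^[k] B := by
  intro k
  induction k with
  | zero => intro B _ h; exact absurd h (Nat.not_lt_zero _)
  | succ k ih =>
    intro B hB h
    by_cases hBS : B ∈ S
    · have hE : (Emb π B).Nonempty := (Finset.mem_filter.1 (hS hBS)).2
      have hstep : stp π S B = par π B := if_pos hBS
      rw [Function.iterate_succ_apply, hstep]
      exact ih (par π B) (par_mem hE)
        (lt_of_lt_of_le (dep_par_lt (π.nonempty_of_mem_parts hB) hE) (Nat.lt_succ_iff.1 h))
    · have hstep : stp π S B = B := if_neg hBS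
      rw [Function.iterate_fixed hstep (k+1)]
      exact hstep

lemma tp_fix {π : FP m} {S : Finset (Finset (Fin m))} (hS : S ⊆ Inn π)
    {B : Finset (Fin m)} (hB : B ∈ π.parts) :
    stp π S (tp π S B) = tp π S B :=
  stp_fix_of_dep hS m B hB (dep_lt hB)

lemma tp_stp {π : FP m} {S : Finset (Finset (Fin m))} (hS : S ⊆ Inn π)
    {B : Finset (Fin m)} (hB : B ∈ π.parts) :
    tp π S (stp π S B) = tp π S B := by
  show (stp π S)^[m] (stp π S B) = (stp π S)^[m] B
  rw [← Function.iterate_succ_apply, Function.iterate_succ_apply']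
  exact tp_fix hS hB

lemma tp_iter {π : FP m} {S : Finset (Finset (Fin m))} (hS : S ⊆ Inn π)
    {B : Finset (Fin m)} (hB : B ∈ π.parts) :
    ∀ k, tp π S ((stp π S)^[k] B) = tp π S B := by
  intro k
  induction k with
  | zero => rfl
  | succ k ih =>
    rw [Function.iterate_succ_apply', tp_stp hS (iter_mem hS hB k)]
    exact ih

lemma tp_idem {π : FP m} {S : Finset (Finset (Fin m))} (hS : S ⊆ Inn π)
    {B : Finset (Fin m)} (hB : B ∈ π.parts) :
    tp π S (tp π S B) = tp π S B := tp_iter hS hB m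


lemma chain_lem {π : FP m} {S : Finset (Finset (Fin m))} (hπ : IsNC π) (hS : S ⊆ Inn π)
    {B T : Finset (Fin m)} (hB : B ∈ π.parts) (hT : T ∈ π.parts) (hfix : stp π S T = T)
    (hmin : T.min' (π.nonempty_of_mem_parts hT) < B.min' (π.nonempty_of_mem_parts hB))
    (hmax : B.max' (π.nonempty_of_mem_parts hB) < T.max' (π.nonempty_of_mem_parts hT)) :
    tp π S B = T ∨
      (T.min' (π.nonempty_of_mem_parts hT) <
          (tp π S B).min' (π.nonempty_of_mem_parts (tp_mem hS hB)) ∧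
        (tp π S B).max' (π.nonempty_of_mem_parts (tp_mem hS hB)) <
          T.max' (π.nonempty_of_mem_parts hT)) := by
  have hTne := π.nonempty_of_mem_parts hT
  suffices h : ∀ k, tp π S B = T ∨
      (T.min' hTne < ((stp π S)^[k] B).min' (π.nonempty_of_mem_parts (iter_mem hS hB k)) ∧
        ((stp π S)^[k] B).max' (π.nonempty_of_mem_parts (iter_mem hS hB k)) < T.max' hTne) by
    exact h m
  intro k
  induction k with
  | zero => exact Or.inr ⟨hmin, hmax⟩
  | succ k ih =>
    rcases ih with h | ⟨h1, h2⟩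
    · exact Or.inl h
    · have hXmem : (stp π S)^[k] B ∈ π.parts := iter_mem hS hB k
      have hXne := π.nonempty_of_mem_parts hXmem
      by_cases hXS : (stp π S)^[k] B ∈ S
      · have hE : (Emb π ((stp π S)^[k] B)).Nonempty := (Finset.mem_filter.1 (hS hXS)).2
        have hTX : T ∈ Emb π ((stp π S)^[k] B) :=
          mem_Emb.2 ⟨hT, (strictlyEmbraces_iff hTne hXne).2 ⟨h1, h2⟩⟩
        have hspan := par_span hπ hXne hE hTX
        have hPmem := par_mem hE
        have hPne := π.nonempty_of_mem_parts hPmem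
        by_cases hPT : par π ((stp π S)^[k] B) = T
        · left
          have e1 : tp π S B = tp π S ((stp π S)^[k] B) := (tp_iter hS hB k).symm
          have e2 : tp π S ((stp π S)^[k] B) = tp π S (stp π S ((stp π S)^[k] B)) :=
            (tp_stp hS hXmem).symm
          have e3 : stp π S ((stp π S)^[k] B) = par π ((stp π S)^[k] B) := if_pos hXS
          rw [e1, e2, e3, hPT]
          exact Function.iterate_fixed hfix m
        · right
          have hEq : (stp π S)^[k+1] B = par π ((stp π S)^[k] B) := by
            rw [Function.iterate_succ_apply']
            exact if_pos hXS
          constructor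
          · rw [min'_eq_min' hEq (π.nonempty_of_mem_parts (iter_mem hS hB (k+1))) hPne]
            rcases eq_or_lt_of_le hspan.1 with heq | hlt
            · exact absurd (π.eq_of_mem_parts hPmem hT
                ((par π ((stp π S)^[k] B)).min'_mem hPne) (heq ▸ T.min'_mem hTne)) hPT
            · exact hlt
          · rw [max'_eq_max' hEq (π.nonempty_of_mem_parts (iter_mem hS hB (k+1))) hPne]
            rcases eq_or_lt_of_le hspan.2 with heq | hlt
            · exact absurd (π.eq_of_mem_parts hPmem hT
                ((par π ((stp π S)^[k] B)).max'_mem hPne) (heq.symm ▸ T.max'_mem hTne)) hPT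
            · exact hlt
      · have hEq : (stp π S)^[k+1] B = (stp π S)^[k] B := by
          rw [Function.iterate_succ_apply']
          exact if_neg hXS
        right
        constructor
        · rw [min'_eq_min' hEq (π.nonempty_of_mem_parts (iter_mem hS hB (k+1))) hXne]
          exact h1
        · rw [max'_eq_max' hEq (π.nonempty_of_mem_parts (iter_mem hS hB (k+1))) hXne]
          exact h2

/-- The setoid whose classes are the blocks of the merged partition. -/
noncomputable def phiSetoid (π : FP m) (S : Finset (Finset (Fin m))) : Setoid (Fin m) :=
  ⟨fun a b => tp π S (π.part a) = tp π S (π.part b),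
    ⟨fun _ => rfl, Eq.symm, Eq.trans⟩⟩

/-- The merged partition associated to a set `S` of inner blocks of `π`. -/
noncomputable def phi (π : FP m) (S : Finset (Finset (Fin m))) : FP m :=
  Finpartition.ofSetoid (phiSetoid π S)

lemma mem_phi_part {π : FP m} {S : Finset (Finset (Fin m))} {a b : Fin m} :
    b ∈ (phi π S).part a ↔ tp π S (π.part a) = tp π S (π.part b) :=
  Finpartition.mem_part_ofSetoid_iff_rel

lemma sameBlock_iff_part_eq {ρ : FP m} {a b : Fin m} :
    SameBlock ρ a b ↔ ρ.part a = ρ.part b := by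
  constructor
  · rintro ⟨D, hD, ha, hb⟩
    rw [ρ.part_eq_of_mem hD ha, ρ.part_eq_of_mem hD hb]
  · intro h
    refine ⟨ρ.part a, ρ.part_mem.2 (Finset.mem_univ a), ρ.mem_part (Finset.mem_univ a), ?_⟩
    rw [h]
    exact ρ.mem_part (Finset.mem_univ b)

lemma sameBlock_phi {π : FP m} {S : Finset (Finset (Fin m))} {a b : Fin m} :
    SameBlock (phi π S) a b ↔ tp π S (π.part a) = tp π S (π.part b) := by
  rw [sameBlock_iff_part_eq]
  constructor
  · intro h
    refine mem_phi_part.1 ?_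
    rw [h]
    exact (phi π S).mem_part (Finset.mem_univ b)
  · intro h
    exact ((phi π S).part_eq_of_mem ((phi π S).part_mem.2 (Finset.mem_univ a))
      (mem_phi_part.2 h)).symm

lemma parts_subset_of_sameBlock {σ ρ : FP m}
    (h : ∀ a b, SameBlock σ a b ↔ SameBlock ρ a b) : σ.parts ⊆ ρ.parts := by
  intro B hB
  obtain ⟨b, hb⟩ := σ.nonempty_of_mem_parts hB
  have hBeq : B = ρ.part b := by
    ext x
    constructor
    · intro hx
      have h1 := (h b x).1 ⟨B, hB, hb, hx⟩
      rw [sameBlock_iff_part_eq] at h1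
      rw [h1]
      exact ρ.mem_part (Finset.mem_univ x)
    · intro hx
      obtain ⟨D, hD, hDb, hDx⟩ := (h b x).2
        ⟨ρ.part b, ρ.part_mem.2 (Finset.mem_univ b), ρ.mem_part (Finset.mem_univ b), hx⟩
      rwa [σ.eq_of_mem_parts hD hB hDb hb] at hDx
  rw [hBeq]
  exact ρ.part_mem.2 (Finset.mem_univ b)

lemma eq_of_sameBlock {σ ρ : FP m} (h : ∀ a b, SameBlock σ a b ↔ SameBlock ρ a b) : σ = ρ :=
  Finpartition.ext (Finset.Subset.antisymm (parts_subset_of_sameBlock h)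
    (parts_subset_of_sameBlock fun a b => (h a b).symm))

lemma tp_part_le' {π : FP m} {S : Finset (Finset (Fin m))} (hS : S ⊆ Inn π)
    {x : Fin m} {T : Finset (Fin m)} (hT : tp π S (π.part x) = T) (hTne : T.Nonempty) :
    T.min' hTne ≤ x ∧ x ≤ T.max' hTne := by
  have hmem := π.part_mem.2 (Finset.mem_univ x)
  have hx := π.mem_part (Finset.mem_univ x)
  have hspan := tp_span hS hmem
  constructor
  · rw [← min'_eq_min' hT (π.nonempty_of_mem_parts (tp_mem hS hmem)) hTne]
    exact le_trans hspan.1 ((π.part x).min'_le x hx)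
  · rw [← max'_eq_max' hT (π.nonempty_of_mem_parts (tp_mem hS hmem)) hTne]
    exact le_trans ((π.part x).le_max' x hx) hspan.2

lemma phi_nc {π : FP m} {S : Finset (Finset (Fin m))} (hπ : IsNC π) (hS : S ⊆ Inn π) :
    IsNC (phi π S) := by
  intro i j k l hij hjk hkl hik hjl
  rw [sameBlock_phi] at hik hjl ⊢
  by_contra hne
  have hT1mem : tp π S (π.part i) ∈ π.parts := tp_mem hS (π.part_mem.2 (Finset.mem_univ i))
  have hT2mem : tp π S (π.part j) ∈ π.parts := tp_mem hS (π.part_mem.2 (Finset.mem_univ j))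
  have hT1ne := π.nonempty_of_mem_parts hT1mem
  have hT2ne := π.nonempty_of_mem_parts hT2mem
  have hi := tp_part_le' hS (rfl : tp π S (π.part i) = _) hT1ne
  have hj := tp_part_le' hS (rfl : tp π S (π.part j) = _) hT2ne
  have hk := tp_part_le' hS hik.symm hT1ne
  have hl := tp_part_le' hS hjl.symm hT2ne
  -- k lies strictly inside the span of T2
  have hk2lo : (tp π S (π.part j)).min' hT2ne < k := lt_of_le_of_lt hj.1 hjk
  have hk2hi : k < (tp π S (π.part j)).max' hT2ne := lt_of_lt_of_le hkl hl.2
  have hBmem := π.part_mem.2 (Finset.mem_univ k)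
  have hBT2 : π.part k ≠ tp π S (π.part j) := by
    intro h
    exact hne (hik.trans (by rw [h]; exact tp_idem hS (π.part_mem.2 (Finset.mem_univ j))))
  have hint := interior_lem hπ hBmem hT2mem hBT2 (π.mem_part (Finset.mem_univ k)) hT2ne
    hk2lo hk2hi
  have hfix2 : stp π S (tp π S (π.part j)) = tp π S (π.part j) :=
    tp_fix hS (π.part_mem.2 (Finset.mem_univ j))
  rcases chain_lem hπ hS hBmem hT2mem hfix2 hint.1 hint.2 with h | hstrict1
  · exact hne (hik.trans h)
  have hstrict1' : (tp π S (π.part j)).min' hT2ne < (tp π S (π.part i)).min' hT1ne ∧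
      (tp π S (π.part i)).max' hT1ne < (tp π S (π.part j)).max' hT2ne := by
    constructor
    · exact lt_of_lt_of_le hstrict1.1
        (le_of_eq (min'_eq_min' hik.symm
          (π.nonempty_of_mem_parts (tp_mem hS (π.part_mem.2 (Finset.mem_univ k)))) hT1ne))
    · exact lt_of_le_of_lt
        (le_of_eq (max'_eq_max' hik hT1ne
          (π.nonempty_of_mem_parts (tp_mem hS (π.part_mem.2 (Finset.mem_univ k)))))) hstrict1.2
  -- j lies strictly inside the span of T1
  have hj1lo : (tp π S (π.part i)).min' hT1ne < j := lt_of_le_of_lt hi.1 hij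
  have hj1hi : j < (tp π S (π.part i)).max' hT1ne := lt_of_lt_of_le hjk hk.2
  have hB'mem := π.part_mem.2 (Finset.mem_univ j)
  have hB'T1 : π.part j ≠ tp π S (π.part i) := by
    intro h
    have : tp π S (π.part j) = tp π S (π.part i) := by
      rw [h]
      exact tp_idem hS (π.part_mem.2 (Finset.mem_univ i))
    exact hne this.symm
  have hint' := interior_lem hπ hB'mem hT1mem hB'T1 (π.mem_part (Finset.mem_univ j)) hT1ne
    hj1lo hj1hi
  have hfix1 : stp π S (tp π S (π.part i)) = tp π S (π.part i) :=
    tp_fix hS (π.part_mem.2 (Finset.mem_univ i))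
  rcases chain_lem hπ hS hB'mem hT1mem hfix1 hint'.1 hint'.2 with h | hstrict2
  · exact hne h.symm
  exact lt_asymm hstrict1'.1 hstrict2.1

lemma phi_refines {π : FP m} {S : Finset (Finset (Fin m))} : Refines π (phi π S) := by
  intro B hB
  obtain ⟨b, hb⟩ := π.nonempty_of_mem_parts hB
  refine ⟨(phi π S).part b, (phi π S).part_mem.2 (Finset.mem_univ b), ?_⟩
  intro x hx
  apply mem_phi_part.2
  rw [π.part_eq_of_mem hB hb, π.part_eq_of_mem hB hx]

lemma phi_ll {π : FP m} {S : Finset (Finset (Fin m))} (hπ : IsNC π) (hS : S ⊆ Inn π) :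
    Ll π (phi π S) := by
  refine ⟨phi_refines, ?_⟩
  intro C hC
  obtain ⟨a, ha⟩ := (phi π S).nonempty_of_mem_parts hC
  have hCpart : (phi π S).part a = C := (phi π S).part_eq_of_mem hC ha
  have hTmem : tp π S (π.part a) ∈ π.parts := tp_mem hS (π.part_mem.2 (Finset.mem_univ a))
  have hTne := π.nonempty_of_mem_parts hTmem
  have hCne : C.Nonempty := ⟨a, ha⟩
  have hTC : ∀ z ∈ tp π S (π.part a), z ∈ C := by
    intro z hz
    rw [← hCpart]
    apply mem_phi_part.2
    rw [π.part_eq_of_mem hTmem hz]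
    exact (tp_idem hS (π.part_mem.2 (Finset.mem_univ a))).symm
  have hCT : ∀ y ∈ C, (tp π S (π.part a)).min' hTne ≤ y ∧
      y ≤ (tp π S (π.part a)).max' hTne := by
    intro y hy
    have hrel : tp π S (π.part a) = tp π S (π.part y) := by
      apply mem_phi_part.1
      rw [hCpart]
      exact hy
    exact tp_part_le' hS hrel.symm hTne
  have hminC : C.min' hCne = (tp π S (π.part a)).min' hTne :=
    le_antisymm (C.min'_le _ (hTC _ (Finset.min'_mem _ hTne))) ((hCT _ (C.min'_mem hCne)).1)
  have hmaxC : C.max' hCne = (tp π S (π.part a)).max' hTne :=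
    le_antisymm ((hCT _ (C.max'_mem hCne)).2) (C.le_max' _ (hTC _ (Finset.max'_mem _ hTne)))
  refine ⟨tp π S (π.part a), hTmem, C.min' hCne, C.max' hCne, isMinOf_min' hCne,
    isMaxOf_max' hCne, ?_, ?_⟩
  · rw [hminC]
    exact Finset.min'_mem _ hTne
  · rw [hmaxC]
    exact Finset.max'_mem _ hTne

/-- The set of inner blocks of `π` merged into their parent by `ρ`. -/
noncomputable def psi (π ρ : FP m) : Finset (Finset (Fin m)) :=
  π.parts.filter fun A => (Emb π A).Nonempty ∧ ∃ C ∈ ρ.parts, A ⊆ C ∧ par π A ⊆ C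

lemma psi_subset_inn {π ρ : FP m} : psi π ρ ⊆ Inn π := by
  intro A hA
  obtain ⟨h1, h2, _⟩ := Finset.mem_filter.1 hA
  exact Finset.mem_filter.2 ⟨h1, h2⟩

lemma psi_phi {π : FP m} (hπ : IsNC π) {S : Finset (Finset (Fin m))} (hS : S ⊆ Inn π) :
    psi π (phi π S) = S := by
  ext A
  simp only [psi, Finset.mem_filter]
  constructor
  · rintro ⟨hA, hE, C, hC, hAC, hPC⟩
    by_contra hAS
    have hfix : stp π S A = A := if_neg hAS
    have htpA : tp π S A = A := Function.iterate_fixed hfix m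
    obtain ⟨a, ha⟩ := π.nonempty_of_mem_parts hA
    have hP := par_mem hE
    obtain ⟨p, hp⟩ := π.nonempty_of_mem_parts hP
    have hsb : SameBlock (phi π S) a p := ⟨C, hC, hAC ha, hPC hp⟩
    rw [sameBlock_phi] at hsb
    rw [π.part_eq_of_mem hA ha, π.part_eq_of_mem hP hp, htpA] at hsb
    -- hsb : A = tp π S (par π A)
    have hle : A.min' (π.nonempty_of_mem_parts hA) ≤
        (par π A).min' (π.nonempty_of_mem_parts hP) := by
      rw [min'_eq_min' hsb (π.nonempty_of_mem_parts hA)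
        (π.nonempty_of_mem_parts (tp_mem hS hP))]
      exact (tp_span hS hP).1
    exact absurd hle (not_le.2 (par_strict (π.nonempty_of_mem_parts hA) hE).1)
  · intro hAS
    obtain ⟨hA, hE⟩ := Finset.mem_filter.1 (hS hAS)
    refine ⟨hA, hE, ?_⟩
    obtain ⟨a, ha⟩ := π.nonempty_of_mem_parts hA
    have hP := par_mem hE
    have htp : tp π S A = tp π S (par π A) := by
      have h1 := tp_stp hS hA
      rw [stp, if_pos hAS] at h1
      exact h1.symm
    refine ⟨(phi π S).part a, (phi π S).part_mem.2 (Finset.mem_univ a), ?_, ?_⟩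
    · intro x hx
      apply mem_phi_part.2
      rw [π.part_eq_of_mem hA ha, π.part_eq_of_mem hA hx]
    · intro y hy
      apply mem_phi_part.2
      rw [π.part_eq_of_mem hA ha, π.part_eq_of_mem hP hy]
      exact htp

lemma phi_psi {π : FP m} (hπ : IsNC π) {ρ : FP m} (hρ : IsNC ρ) (hLl : Ll π ρ) :
    phi π (psi π ρ) = ρ := by
  have hS : psi π ρ ⊆ Inn π := psi_subset_inn
  -- choose the base block of each block of ρ
  have hB0ex : ∀ C : Finset (Fin m), ∃ B₀ : Finset (Fin m), C ∈ ρ.parts →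
      B₀ ∈ π.parts ∧ B₀ ⊆ C ∧ ∀ hCne : C.Nonempty, C.min' hCne ∈ B₀ ∧ C.max' hCne ∈ B₀ := by
    intro C
    by_cases hC : C ∈ ρ.parts
    · obtain ⟨B, hB, x, y, hx, hy, hxB, hyB⟩ := hLl.2 C hC
      have hCne := ρ.nonempty_of_mem_parts hC
      obtain ⟨C', hC', hBC'⟩ := hLl.1 B hB
      have hC'C : C' = C := ρ.eq_of_mem_parts hC' hC (hBC' hxB) hx.1
      refine ⟨B, fun _ => ⟨hB, hC'C ▸ hBC', fun hCne' => ?_⟩⟩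
      constructor
      · rw [← hx.eq_min' hCne']
        exact hxB
      · rw [← hy.eq_max' hCne']
        exact hyB
    · exact ⟨∅, fun h => absurd h hC⟩
  choose B0 hB0spec using hB0ex
  have base : ∀ C ∈ ρ.parts, tp π (psi π ρ) (B0 C) = B0 C := by
    intro C hC
    obtain ⟨hB₀mem, hB₀sub, hminmax⟩ := hB0spec C hC
    have hCne := ρ.nonempty_of_mem_parts hC
    have hB₀ne := π.nonempty_of_mem_parts hB₀mem
    have hnotS : B0 C ∉ psi π ρ := by
      intro hmem
      obtain ⟨hmem1, hE, C'', hC'', hsub1, hsub2⟩ := Finset.mem_filter.1 hmem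
      have hC''C : C'' = C :=
        ρ.eq_of_mem_parts hC'' hC (hsub1 (hminmax hCne).1) (C.min'_mem hCne)
      have hPne := π.nonempty_of_mem_parts (par_mem hE)
      have hPC : (par π (B0 C)).min' hPne ∈ C := by
        have h0 := hsub2 (Finset.min'_mem _ hPne)
        rwa [hC''C] at h0
      have h1 : C.min' hCne ≤ (par π (B0 C)).min' hPne := C.min'_le _ hPC
      have h2 : (par π (B0 C)).min' hPne < (B0 C).min' hB₀ne := (par_strict hB₀ne hE).1
      have h3 : (B0 C).min' hB₀ne ≤ C.min' hCne := (B0 C).min'_le _ (hminmax hCne).1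
      exact absurd (lt_of_lt_of_le h2 h3) (not_lt.2 h1)
    have hfix : stp π (psi π ρ) (B0 C) = B0 C := if_neg hnotS
    exact Function.iterate_fixed hfix m
  have step : ∀ B, B ∈ π.parts → ∀ C, C ∈ ρ.parts → B ⊆ C → B ≠ B0 C →
      (Emb π B).Nonempty ∧ B ∈ psi π ρ ∧ par π B ⊆ C := by
    intro B hB C hC hBC hne
    obtain ⟨hB₀mem, hB₀sub, hminmax⟩ := hB0spec C hC
    have hCne := ρ.nonempty_of_mem_parts hC
    have hB₀ne := π.nonempty_of_mem_parts hB₀mem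
    have hBne := π.nonempty_of_mem_parts hB
    have heqmin : (B0 C).min' hB₀ne = C.min' hCne :=
      le_antisymm ((B0 C).min'_le _ (hminmax hCne).1)
        (C.min'_le _ (hB₀sub ((B0 C).min'_mem hB₀ne)))
    have heqmax : (B0 C).max' hB₀ne = C.max' hCne :=
      le_antisymm (C.le_max' _ (hB₀sub ((B0 C).max'_mem hB₀ne)))
        ((B0 C).le_max' _ (hminmax hCne).2)
    have hm1 : (B0 C).min' hB₀ne < B.min' hBne := by
      have hle : (B0 C).min' hB₀ne ≤ B.min' hBne := by
        rw [heqmin]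
        exact C.min'_le _ (hBC (B.min'_mem hBne))
      rcases lt_or_eq_of_le hle with h | h
      · exact h
      · exact absurd (π.eq_of_mem_parts hB hB₀mem (B.min'_mem hBne)
          (h ▸ (B0 C).min'_mem hB₀ne)) hne
    have hm2 : B.max' hBne < (B0 C).max' hB₀ne := by
      have hle : B.max' hBne ≤ (B0 C).max' hB₀ne := by
        rw [heqmax]
        exact C.le_max' _ (hBC (B.max'_mem hBne))
      rcases lt_or_eq_of_le hle with h | h
      · exact h
      · refine absurd (π.eq_of_mem_parts hB hB₀mem (B.max'_mem hBne) ?_) hne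
        rw [h]
        exact (B0 C).max'_mem hB₀ne
    have hB0E : B0 C ∈ Emb π B :=
      mem_Emb.2 ⟨hB₀mem, (strictlyEmbraces_iff hB₀ne hBne).2 ⟨hm1, hm2⟩⟩
    have hE : (Emb π B).Nonempty := ⟨B0 C, hB0E⟩
    have hPmem := par_mem hE
    have hPne := π.nonempty_of_mem_parts hPmem
    have hspan := par_span hπ hBne hE hB0E
    obtain ⟨C', hC', hPC'⟩ := hLl.1 (par π B) hPmem
    have hC'C : C' = C := by
      rcases eq_or_lt_of_le hspan.1 with heq | hlt
      · have hPB0 : par π B = B0 C :=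
          π.eq_of_mem_parts hPmem hB₀mem ((par π B).min'_mem hPne)
            (heq ▸ (B0 C).min'_mem hB₀ne)
        refine ρ.eq_of_mem_parts hC' hC (hPC' ((par π B).min'_mem hPne)) ?_
        rw [min'_eq_min' hPB0 hPne hB₀ne]
        exact hB₀sub ((B0 C).min'_mem hB₀ne)
      · have hq1 : C.min' hCne < (par π B).min' hPne := by
          rw [← heqmin]
          exact hlt
        have hq2 : (par π B).min' hPne < B.min' hBne := (par_strict hBne hE).1
        have hq3 : B.min' hBne < (par π B).max' hPne :=
          lt_of_le_of_lt (B.min'_le _ (B.max'_mem hBne)) (par_strict hBne hE).2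
        have hsb1 : SameBlock ρ (C.min' hCne) (B.min' hBne) :=
          ⟨C, hC, C.min'_mem hCne, hBC (B.min'_mem hBne)⟩
        have hsb2 : SameBlock ρ ((par π B).min' hPne) ((par π B).max' hPne) :=
          ⟨C', hC', hPC' (Finset.min'_mem _ hPne), hPC' (Finset.max'_mem _ hPne)⟩
        obtain ⟨D, hD, hd1, hd2⟩ := hρ _ _ _ _ hq1 hq2 hq3 hsb1 hsb2
        have hDC : D = C := ρ.eq_of_mem_parts hD hC hd1 (C.min'_mem hCne)
        exact ρ.eq_of_mem_parts hC' hC (hPC' (Finset.min'_mem _ hPne)) (hDC ▸ hd2)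
    refine ⟨hE, ?_, hC'C ▸ hPC'⟩
    exact Finset.mem_filter.2 ⟨hB, hE, C, hC, hBC, hC'C ▸ hPC'⟩
  have key : ∀ d B, B ∈ π.parts → ∀ C, C ∈ ρ.parts → B ⊆ C → dep π B ≤ d →
      tp π (psi π ρ) B = B0 C := by
    intro d
    induction d with
    | zero =>
      intro B hB C hC hBC hd
      by_cases hne : B = B0 C
      · rw [hne]
        exact base C hC
      · obtain ⟨hE, -, -⟩ := step B hB C hC hBC hne
        have h1 : 0 < dep π B := Finset.card_pos.2 hE
        omega
    | succ d ih =>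
      intro B hB C hC hBC hd
      by_cases hne : B = B0 C
      · rw [hne]
        exact base C hC
      · obtain ⟨hE, hBS, hPC⟩ := step B hB C hC hBC hne
        have h1 : tp π (psi π ρ) B = tp π (psi π ρ) (par π B) := by
          have h2 := tp_stp hS hB
          rw [stp, if_pos hBS] at h2
          exact h2.symm
        rw [h1]
        refine ih (par π B) (par_mem hE) C hC hPC ?_
        have := dep_par_lt (π.nonempty_of_mem_parts hB) hE
        omega
  apply eq_of_sameBlock
  intro a b
  rw [sameBlock_phi]
  have hmain : ∀ x : Fin m, tp π (psi π ρ) (π.part x) = B0 (ρ.part x) := by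
    intro x
    have hmem := π.part_mem.2 (Finset.mem_univ x)
    have hCx := ρ.part_mem.2 (Finset.mem_univ x)
    have hsub : π.part x ⊆ ρ.part x := by
      obtain ⟨C', hC', hsub⟩ := hLl.1 (π.part x) hmem
      have hC'eq : C' = ρ.part x := ρ.eq_of_mem_parts hC' hCx
        (hsub (π.mem_part (Finset.mem_univ x))) (ρ.mem_part (Finset.mem_univ x))
      exact hC'eq ▸ hsub
    exact key (dep π (π.part x)) _ hmem _ hCx hsub le_rfl
  rw [hmain a, hmain b]
  constructor
  · intro h
    have hCa := ρ.part_mem.2 (Finset.mem_univ a)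
    have hCb := ρ.part_mem.2 (Finset.mem_univ b)
    obtain ⟨hBa, hBasub, -⟩ := hB0spec _ hCa
    obtain ⟨hBb, hBbsub, -⟩ := hB0spec _ hCb
    obtain ⟨e, he⟩ := π.nonempty_of_mem_parts hBa
    have heq : ρ.part a = ρ.part b := ρ.eq_of_mem_parts hCa hCb (hBasub he) (hBbsub (h ▸ he))
    exact sameBlock_iff_part_eq.2 heq
  · intro h
    rw [sameBlock_iff_part_eq.1 h]


end Statement2Proof


/-- Remark 2.14: for `π ∈ NC(n)`, the number of `ρ ∈ NC(n)` with
`ρ ≫ π` is `2 ^ (|π| - |π|_out)`. -/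
theorem statement2 (n : ℕ) (hn : 0 < n) (π : FP n) (hπ : IsNC π) :
    {ρ : FP n | IsNC ρ ∧ Ll π ρ}.ncard = 2 ^ (π.parts.card - numOuter π) := by
  have hinj : Set.InjOn (phi π) ↑(Inn π).powerset := by
    intro S hS S' hS' heq
    have h1 : S ⊆ Inn π := Finset.mem_powerset.1 (Finset.mem_coe.1 hS)
    have h2 : S' ⊆ Inn π := Finset.mem_powerset.1 (Finset.mem_coe.1 hS')
    calc S = psi π (phi π S) := (psi_phi hπ h1).symm
      _ = psi π (phi π S') := by rw [heq]
      _ = S' := psi_phi hπ h2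
  have hset : {ρ : FP n | IsNC ρ ∧ Ll π ρ} = phi π '' ↑(Inn π).powerset := by
    ext ρ
    simp only [Set.mem_setOf_eq, Set.mem_image, Finset.mem_coe, Finset.mem_powerset]
    constructor
    · rintro ⟨hNC, hLl⟩
      exact ⟨psi π ρ, psi_subset_inn, phi_psi hπ hNC hLl⟩
    · rintro ⟨S, hS, rfl⟩
      exact ⟨phi_nc hπ hS, phi_ll hπ hS⟩
  rw [hset, Set.ncard_image_of_injOn hinj, Set.ncard_coe_finset, Finset.card_powerset]
  congr 1
  have hfilter : π.parts.filter (fun A => ¬ IsOuter π A) = Inn π := by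
    ext A
    simp only [Finset.mem_filter, Inn]
    constructor
    · rintro ⟨hA, h2⟩
      refine ⟨hA, ?_⟩
      by_contra hE
      apply h2
      refine ⟨hA, ?_⟩
      rintro ⟨B, hB, hSE⟩
      exact hE ⟨B, mem_Emb.2 ⟨hB, hSE⟩⟩
    · rintro ⟨hA, hE⟩
      refine ⟨hA, ?_⟩
      rintro ⟨-, hno⟩
      obtain ⟨B, hB⟩ := hE
      exact hno ⟨B, (mem_Emb.1 hB).1, (mem_Emb.1 hB).2⟩
  have hadd := Finset.card_filter_add_card_filter_not
    (s := π.parts) (p := fun A => IsOuter π A)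
  rw [hfilter] at hadd
  unfold numOuter
  omega
end BBP
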